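/- arXiv:1210.2031 — 2 statements merged into one kernel-verified Lean document; each statement's English description precedes it below -/
import Mathlib

section
/- Let h : {1,2} × {1,2,…,n} × {1,…,n} → ℝ (for two normal indices α ∈ {1,2}) satisfy: full symmetry h_{α,ijk} = h_{α,ikj} and h_{α,ijk} = h_{α,jik}; the trace condition h_{α,11k} + h_{α,22k} = 0 for all k; and h_{α,ijk} = 0 whenever i ≥ 3 and j ≥ 3. Then ∑_{α∈{1,2}} ∑_{i,j,k} h_{α,ijk}² ≥ 4 ∑_k h_{1,11k}² + 4 ∑_k h_{2,12k}². -/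
open Finset

lemma split_sum {n : ℕ} (f : Fin (n + 2) → ℝ) :
    ∑ i, f i = f 0 + f 1 + ∑ i : Fin (n + 2), (if 2 ≤ (i : ℕ) then f i else 0) := by
  have key : ∀ i : Fin (n + 2),
      f i = (if i = 0 then f 0 else 0) + (if i = 1 then f 1 else 0)
        + (if 2 ≤ (i : ℕ) then f i else 0) := by
    intro i
    by_cases h0 : i = 0
    · subst h0; simp
    · by_cases h1 : i = 1
      · subst h1; simp
      · have h2 : 2 ≤ (i : ℕ) := by
          have v0 : (i : ℕ) ≠ 0 := fun hh => h0 (Fin.ext (by simpa using hh))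
          have v1 : (i : ℕ) ≠ 1 := fun hh => h1 (Fin.ext (by simpa using hh))
          omega
        simp [h0, h1, h2]
  rw [Finset.sum_congr rfl (fun i _ => key i), Finset.sum_add_distrib,
    Finset.sum_add_distrib, Finset.sum_ite_eq' Finset.univ (0 : Fin (n + 2)),
    Finset.sum_ite_eq' Finset.univ (1 : Fin (n + 2))]
  simp

lemma first_two {n : ℕ} (g : Fin (n + 2) → ℝ) (hg : ∀ k, 0 ≤ g k) :
    g 0 + g 1 ≤ ∑ k, g k := by
  rw [split_sum g]
  have : (0:ℝ) ≤ ∑ i : Fin (n + 2), (if 2 ≤ (i : ℕ) then g i else 0) := by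
    apply Finset.sum_nonneg
    intro i _
    split
    · exact hg i
    · exact le_rfl
  linarith

lemma bound {n : ℕ} (a b c : Fin (n + 2) → ℝ)
    (hc : ∀ k, (c k)^2 ≤ (a k)^2 + (b k)^2)
    (h2 : 2 * ((a 0)^2 + (b 0)^2 + ((a 1)^2 + (b 1)^2)) = 4 * ((c 0)^2 + (c 1)^2)) :
    4 * ∑ k, (c k)^2
      ≤ 2 * ∑ k, ((a k)^2 + (b k)^2)
        + 4 * ∑ k : Fin (n + 2), (if 2 ≤ (k : ℕ) then (a k)^2 + (b k)^2 else 0) := by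
  have e1 : ∑ k, ((a k)^2 + (b k)^2)
      = ((a 0)^2 + (b 0)^2) + ((a 1)^2 + (b 1)^2)
        + ∑ k : Fin (n + 2), (if 2 ≤ (k : ℕ) then (a k)^2 + (b k)^2 else 0) :=
    split_sum (fun k => (a k)^2 + (b k)^2)
  have e2 : ∑ k, (c k)^2
      = (c 0)^2 + (c 1)^2 + ∑ k : Fin (n + 2), (if 2 ≤ (k : ℕ) then (c k)^2 else 0) :=
    split_sum (fun k => (c k)^2)
  have A : ∑ k : Fin (n + 2), (if 2 ≤ (k : ℕ) then (c k)^2 else 0)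
      ≤ ∑ k : Fin (n + 2), (if 2 ≤ (k : ℕ) then (a k)^2 + (b k)^2 else 0) := by
    apply Finset.sum_le_sum
    intro k _
    split
    · exact hc k
    · exact le_rfl
  have B : (0:ℝ) ≤ ∑ k : Fin (n + 2), (if 2 ≤ (k : ℕ) then (a k)^2 + (b k)^2 else 0) := by
    apply Finset.sum_nonneg
    intro k _
    split
    · positivity
    · exact le_rfl
  rw [e1, e2]
  linarith

lemma key {n : ℕ} (h : Fin 2 → Fin (n + 2) → Fin (n + 2) → Fin (n + 2) → ℝ)
    (hsym1 : ∀ α i j k, h α i j k = h α i k j)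
    (hsym2 : ∀ α i j k, h α i j k = h α j i k)
    (htrace : ∀ α k, h α 0 0 k + h α 1 1 k = 0) (α : Fin 2) :
    2 * ∑ k, ((h α 0 0 k)^2 + (h α 0 1 k)^2)
      + 4 * ∑ k : Fin (n + 2), (if 2 ≤ (k : ℕ) then (h α 0 0 k)^2 + (h α 0 1 k)^2 else 0)
    ≤ ∑ i, ∑ j, ∑ k, (h α i j k)^2 := by
  have sq11 : ∀ k, (h α 1 1 k)^2 = (h α 0 0 k)^2 := fun k => by
    linear_combination (h α 1 1 k - h α 0 0 k) * htrace α k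
  have inner0 : ∀ i j, (0:ℝ) ≤ ∑ k, (h α i j k)^2 :=
    fun i j => Finset.sum_nonneg fun k _ => sq_nonneg _
  -- F 0
  have F0 : ∑ k, (h α 0 0 k)^2 + ∑ k, (h α 0 1 k)^2
      + ∑ j : Fin (n + 2), (if 2 ≤ (j : ℕ) then (h α 0 0 j)^2 + (h α 0 1 j)^2 else 0)
      ≤ ∑ j, ∑ k, (h α 0 j k)^2 := by
    rw [split_sum (fun j => ∑ k, (h α 0 j k)^2)]
    have t : ∑ j : Fin (n + 2), (if 2 ≤ (j : ℕ) then (h α 0 0 j)^2 + (h α 0 1 j)^2 else 0)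
        ≤ ∑ j : Fin (n + 2), (if 2 ≤ (j : ℕ) then ∑ k, (h α 0 j k)^2 else 0) := by
      apply Finset.sum_le_sum
      intro j _
      split
      · have := first_two (fun k => (h α 0 j k)^2) (fun k => sq_nonneg _)
        try simp only at this
        rw [hsym1 α 0 j 0, hsym1 α 0 j 1] at this
        exact this
      · exact le_rfl
    linarith
  -- F 1
  have F1 : ∑ k, (h α 0 0 k)^2 + ∑ k, (h α 0 1 k)^2
      + ∑ j : Fin (n + 2), (if 2 ≤ (j : ℕ) then (h α 0 0 j)^2 + (h α 0 1 j)^2 else 0)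
      ≤ ∑ j, ∑ k, (h α 1 j k)^2 := by
    rw [split_sum (fun j => ∑ k, (h α 1 j k)^2)]
    have e0 : ∑ k, (h α 1 0 k)^2 = ∑ k, (h α 0 1 k)^2 := by
      apply Finset.sum_congr rfl
      intro k _
      rw [hsym2 α 1 0 k]
    have e1 : ∑ k, (h α 1 1 k)^2 = ∑ k, (h α 0 0 k)^2 := by
      apply Finset.sum_congr rfl
      intro k _
      exact sq11 k
    have t : ∑ j : Fin (n + 2), (if 2 ≤ (j : ℕ) then (h α 0 0 j)^2 + (h α 0 1 j)^2 else 0)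
        ≤ ∑ j : Fin (n + 2), (if 2 ≤ (j : ℕ) then ∑ k, (h α 1 j k)^2 else 0) := by
      apply Finset.sum_le_sum
      intro j _
      split
      · have := first_two (fun k => (h α 1 j k)^2) (fun k => sq_nonneg _)
        try simp only at this
        rw [hsym1 α 1 j 0, hsym2 α 1 0 j] at this
        have e2 : (h α 1 j 1)^2 = (h α 0 0 j)^2 := by
          rw [hsym1 α 1 j 1]
          exact sq11 j
        rw [e2] at this
        linarith
      · exact le_rfl
    try simp only at *
    linarith
  -- rest
  have Frest : 2 * ∑ i : Fin (n + 2), (if 2 ≤ (i : ℕ) then (h α 0 0 i)^2 + (h α 0 1 i)^2 else 0)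
      ≤ ∑ i : Fin (n + 2), (if 2 ≤ (i : ℕ) then ∑ j, ∑ k, (h α i j k)^2 else 0) := by
    rw [Finset.mul_sum]
    apply Finset.sum_le_sum
    intro i _
    split
    · have hF : (fun j => ∑ k, (h α i j k)^2) 0 + (fun j => ∑ k, (h α i j k)^2) 1
          ≤ ∑ j, ∑ k, (h α i j k)^2 :=
        first_two (fun j => ∑ k, (h α i j k)^2) (fun j => inner0 i j)
      simp only at hF
      have g0 : (h α i 0 0)^2 + (h α i 0 1)^2 ≤ ∑ k, (h α i 0 k)^2 := by
        have := first_two (fun k => (h α i 0 k)^2) (fun k => sq_nonneg _)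
        simpa using this
      have g1 : (h α i 1 0)^2 + (h α i 1 1)^2 ≤ ∑ k, (h α i 1 k)^2 := by
        have := first_two (fun k => (h α i 1 k)^2) (fun k => sq_nonneg _)
        simpa using this
      have r1 : h α i 0 0 = h α 0 0 i := by
        rw [hsym2 α i 0 0, hsym1 α 0 i 0]
      have r2 : h α i 0 1 = h α 0 1 i := by
        rw [hsym2 α i 0 1, hsym1 α 0 i 1]
      have r3 : h α i 1 0 = h α 0 1 i := by
        rw [hsym1 α i 1 0, hsym2 α i 0 1, hsym1 α 0 i 1]
      have r4 : (h α i 1 1)^2 = (h α 0 0 i)^2 := by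
        rw [hsym2 α i 1 1, hsym1 α 1 i 1]
        exact sq11 i
      rw [r1, r2] at g0
      rw [r3, r4] at g1
      linarith
    · simp
  have Ssplit : ∑ i, ∑ j, ∑ k, (h α i j k)^2
      = (∑ j, ∑ k, (h α 0 j k)^2) + (∑ j, ∑ k, (h α 1 j k)^2)
        + ∑ i : Fin (n + 2), (if 2 ≤ (i : ℕ) then ∑ j, ∑ k, (h α i j k)^2 else 0) :=
    split_sum (fun i => ∑ j, ∑ k, (h α i j k)^2)
  have dist : ∑ k : Fin (n + 2), ((h α 0 0 k)^2 + (h α 0 1 k)^2)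
      = ∑ k : Fin (n + 2), (h α 0 0 k)^2 + ∑ k : Fin (n + 2), (h α 0 1 k)^2 :=
    Finset.sum_add_distrib
  rw [Ssplit]
  linarith [F0, F1, Frest, dist]


/-- For coefficients h_{α,ijk} (α ∈ {1,2}, 1 ≤ i,j,k ≤ n, n ≥ 2) fully
symmetric in i,j,k, satisfying h_{α,11k} + h_{α,22k} = 0 and vanishing whenever
i ≥ 3 and j ≥ 3, one has
∑_{α,i,j,k} h_{α,ijk}² ≥ 4∑_k h_{1,11k}² + 4∑_k h_{2,12k}². (Indices 0-based here.) -/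
theorem stmt16 (n : ℕ) (h : Fin 2 → Fin (n + 2) → Fin (n + 2) → Fin (n + 2) → ℝ)
    (hsym1 : ∀ α i j k, h α i j k = h α i k j)
    (hsym2 : ∀ α i j k, h α i j k = h α j i k)
    (htrace : ∀ α k, h α 0 0 k + h α 1 1 k = 0)
    (hvanish : ∀ α (i j k : Fin (n + 2)), 2 ≤ (i : ℕ) → 2 ≤ (j : ℕ) → h α i j k = 0) :
    ∑ α, ∑ i, ∑ j, ∑ k, (h α i j k)^2
      ≥ 4 * ∑ k, (h 0 0 0 k)^2 + 4 * ∑ k, (h 1 0 1 k)^2 := by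
  have sq11 : ∀ α k, (h α 1 1 k)^2 = (h α 0 0 k)^2 := fun α k => by
    linear_combination (h α 1 1 k - h α 0 0 k) * htrace α k
  have hb0 : ∀ α : Fin 2, (h α 0 1 0)^2 = (h α 0 0 1)^2 := by
    intro α
    rw [hsym1 α 0 1 0]
  have hb1 : ∀ α : Fin 2, (h α 0 1 1)^2 = (h α 0 0 0)^2 := by
    intro α
    rw [hsym2 α 0 1 1, hsym1 α 1 0 1]
    exact sq11 α 0
  have key0 := key h hsym1 hsym2 htrace 0
  have key1 := key h hsym1 hsym2 htrace 1
  have b0 : 4 * ∑ k, (h 0 0 0 k)^2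
      ≤ 2 * ∑ k, ((h 0 0 0 k)^2 + (h 0 0 1 k)^2)
        + 4 * ∑ k : Fin (n + 2), (if 2 ≤ (k : ℕ) then (h 0 0 0 k)^2 + (h 0 0 1 k)^2 else 0) := by
    apply bound (fun k => h 0 0 0 k) (fun k => h 0 0 1 k) (fun k => h 0 0 0 k)
    · intro k; nlinarith [sq_nonneg (h 0 0 1 k)]
    · have := hb0 0
      have := hb1 0
      linarith
  have b1 : 4 * ∑ k, (h 1 0 1 k)^2
      ≤ 2 * ∑ k, ((h 1 0 0 k)^2 + (h 1 0 1 k)^2)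
        + 4 * ∑ k : Fin (n + 2), (if 2 ≤ (k : ℕ) then (h 1 0 0 k)^2 + (h 1 0 1 k)^2 else 0) := by
    apply bound (fun k => h 1 0 0 k) (fun k => h 1 0 1 k) (fun k => h 1 0 1 k)
    · intro k; nlinarith [sq_nonneg (h 1 0 0 k)]
    · have := hb0 1
      have := hb1 1
      linarith
  rw [Fin.sum_univ_two]
  have key0' : 2 * ∑ k, ((h 0 0 0 k)^2 + (h 0 0 1 k)^2)
      + 4 * ∑ k : Fin (n + 2), (if 2 ≤ (k : ℕ) then (h 0 0 0 k)^2 + (h 0 0 1 k)^2 else 0)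
      ≤ ∑ i, ∑ j, ∑ k, (h 0 i j k)^2 := key0
  have key1' : 2 * ∑ k, ((h 1 0 0 k)^2 + (h 1 0 1 k)^2)
      + 4 * ∑ k : Fin (n + 2), (if 2 ≤ (k : ℕ) then (h 1 0 0 k)^2 + (h 1 0 1 k)^2 else 0)
      ≤ ∑ i, ∑ j, ∑ k, (h 1 i j k)^2 := key1
  linarith
end

section
/- Let M be a Riemannian manifold and let b, v : M → ℝ be smooth positive functions satisfying Δ(b²) ≥ 4|∇b|² − 3b⁴ and Δv ≥ b² v + v⁻¹|∇v|². Then for all real s, q ≥ 1, Δ(b^{2s} v^q) ≥ (q − 3s) b^{2s+2} v^q. -/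
lemma quad_aux (a c X Y Z : ℝ) (hX : 0 ≤ X) (hY : 0 ≤ Y) (hZ : Z^2 ≤ Y * X) :
    0 ≤ a^2*Y + c^2*X + 2*a*c*Z := by
  have hu : 0 ≤ a^2*Y + c^2*X := by positivity
  have h1 : (2*a*c*Z)^2 ≤ (a^2*Y + c^2*X)^2 := by
    nlinarith [sq_nonneg (a^2*Y - c^2*X), mul_nonneg (sq_nonneg (a*c)) (sub_nonneg.2 hZ)]
  nlinarith [h1, hu]

set_option maxHeartbeats 2000000 in
/-- On a Riemannian manifold (encoded abstractly via a Laplace-type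
operator Δ together with its carré du champ Γ f g = ⟨∇f, ∇g⟩, satisfying the standard
symmetry, nonnegativity, Cauchy–Schwarz, product rule and chain rule for powers), if
positive functions b, v satisfy Δ(b²) ≥ 4|∇b|² − 3b⁴ and Δv ≥ b²v + v⁻¹|∇v|², then for
all s, q ≥ 1, Δ(b^{2s} v^q) ≥ (q − 3s) b^{2s+2} v^q pointwise. -/
theorem stmt17 {M : Type*}
    (Δ : (M → ℝ) → (M → ℝ)) (Γ : (M → ℝ) → (M → ℝ) → (M → ℝ))
    (hΓsymm : ∀ f g, Γ f g = Γ g f)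
    (hΓnonneg : ∀ f x, 0 ≤ Γ f f x)
    (hΓCS : ∀ f g x, (Γ f g x)^2 ≤ Γ f f x * Γ g g x)
    (hprod : ∀ f g : M → ℝ, ∀ x,
      Δ (fun y => f y * g y) x = f x * Δ g x + g x * Δ f x + 2 * Γ f g x)
    (hΓpow : ∀ (f g : M → ℝ) (a : ℝ), (∀ y, 0 < f y) → ∀ x,
      Γ (fun y => f y ^ a) g x = a * f x ^ (a - 1) * Γ f g x)
    (hΔpow : ∀ (f : M → ℝ) (a : ℝ), (∀ y, 0 < f y) → ∀ x,
      Δ (fun y => f y ^ a) x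
        = a * f x ^ (a - 1) * Δ f x + a * (a - 1) * f x ^ (a - 2) * Γ f f x)
    (b v : M → ℝ) (hb : ∀ x, 0 < b x) (hv : ∀ x, 0 < v x)
    (hΔb2 : ∀ x, Δ (fun y => b y ^ (2 : ℝ)) x ≥ 4 * Γ b b x - 3 * b x ^ (4 : ℝ))
    (hΔv : ∀ x, Δ v x ≥ b x ^ (2 : ℝ) * v x + (v x)⁻¹ * Γ v v x)
    (s q : ℝ) (hs : 1 ≤ s) (hq : 1 ≤ q) :
    ∀ x, Δ (fun y => b y ^ (2 * s) * v y ^ q) x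
      ≥ (q - 3 * s) * b x ^ (2 * s + 2) * v x ^ q := by
  intro x
  have hbx := hb x
  have hvx := hv x
  obtain ⟨X, hXdef⟩ : ∃ X, Γ b b x = X := ⟨_, rfl⟩
  obtain ⟨Y, hYdef⟩ : ∃ Y, Γ v v x = Y := ⟨_, rfl⟩
  obtain ⟨Z, hZdef⟩ : ∃ Z, Γ v b x = Z := ⟨_, rfl⟩
  have hXn : 0 ≤ X := hXdef ▸ hΓnonneg b x
  have hYn : 0 ≤ Y := hYdef ▸ hΓnonneg v x
  have hZ2 : Z^2 ≤ Y * X := by rw [← hXdef, ← hYdef, ← hZdef]; exact hΓCS v b x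
  obtain ⟨A, hAdef⟩ : ∃ A, b x ^ (2*s-2) = A := ⟨_, rfl⟩
  obtain ⟨C, hCdef⟩ : ∃ C, v x ^ (q-2) = C := ⟨_, rfl⟩
  have hA : (0:ℝ) < A := hAdef ▸ Real.rpow_pos_of_pos hbx _
  have hC : (0:ℝ) < C := hCdef ▸ Real.rpow_pos_of_pos hvx _
  have eb2n : b x ^ (2:ℝ) = b x ^ 2 := by
    rw [show ((2:ℝ)) = ((2:ℕ):ℝ) by norm_num, Real.rpow_natCast]
  have eb4n : b x ^ (4:ℝ) = b x ^ 4 := by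
    rw [show ((4:ℝ)) = ((4:ℕ):ℝ) by norm_num, Real.rpow_natCast]
  have ev2n : v x ^ (2:ℝ) = v x ^ 2 := by
    rw [show ((2:ℝ)) = ((2:ℕ):ℝ) by norm_num, Real.rpow_natCast]
  have eb1 : b x ^ (2*s - 1) = A * b x := by
    have h := Real.rpow_add hbx (2*s-2) 1
    rw [show 2*s-2+1 = 2*s-1 by ring, Real.rpow_one, hAdef] at h
    exact h
  have eb0 : b x ^ (2*s) = A * b x ^ 2 := by
    have h := Real.rpow_add hbx (2*s-2) 2
    rw [show 2*s-2+2 = 2*s by ring, eb2n, hAdef] at h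
    exact h
  have eb3 : b x ^ (2*s + 2) = A * b x ^ 4 := by
    have h := Real.rpow_add hbx (2*s-2) 4
    rw [show 2*s-2+4 = 2*s+2 by ring, eb4n, hAdef] at h
    exact h
  have ev1 : v x ^ (q - 1) = C * v x := by
    have h := Real.rpow_add hvx (q-2) 1
    rw [show q-2+1 = q-1 by ring, Real.rpow_one, hCdef] at h
    exact h
  have ev0 : v x ^ q = C * v x ^ 2 := by
    have h := Real.rpow_add hvx (q-2) 2
    rw [show q-2+2 = q by ring, ev2n, hCdef] at h
    exact h
  -- lower bound on Δ b
  have hΔb : 2 * b x * Δ b x ≥ 2 * X - 3 * b x ^ 4 := by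
    have h1 := hΔpow b 2 hb x
    have h2 := hΔb2 x
    rw [h1, eb4n, hXdef] at h2
    norm_num [Real.rpow_one, Real.rpow_zero] at h2
    linarith
  -- lower bound on Δ (b ^ (2s))
  have hΔbs : Δ (fun y => b y ^ (2*s)) x ≥ 4*s^2 * A * X - 3*s*(A * b x ^ 4) := by
    have h1 := hΔpow b (2*s) hb x
    rw [eb1, show (2*s - 2 : ℝ) = 2*s-2 by ring, hAdef, hXdef] at h1
    rw [h1]
    have hsA : 0 ≤ s * A := by positivity
    have h2 := mul_le_mul_of_nonneg_left hΔb hsA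
    nlinarith [h2, mul_nonneg (mul_nonneg (mul_nonneg
      (by linarith : (0:ℝ) ≤ 2*s) (by linarith : (0:ℝ) ≤ 2*s - 1)) hA.le) hXn]
  -- lower bound on Δ (v ^ q)
  have h2' : v x * Δ v x ≥ b x ^ 2 * v x ^ 2 + Y := by
    have h2 := hΔv x
    rw [eb2n, hYdef] at h2
    have h4 := mul_le_mul_of_nonneg_left h2 hvx.le
    have hinv : v x * ((v x)⁻¹ * Y) = Y := by field_simp
    nlinarith [h4, hinv]
  have hΔvq : Δ (fun y => v y ^ q) x ≥ q * b x ^ 2 * (C * v x ^ 2) + q^2 * C * Y := by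
    have h1 := hΔpow v q hv x
    rw [ev1, hCdef, hYdef] at h1
    rw [h1]
    have ht := mul_le_mul_of_nonneg_left h2' (by positivity : (0:ℝ) ≤ q * C)
    have hq1 : 0 ≤ q * (q-1) * C * Y := by
      have h5 : (0:ℝ) ≤ q * (q-1) := by nlinarith
      positivity
    nlinarith [ht, hq1]
  -- cross term
  have hΓBV : Γ (fun y => b y ^ (2*s)) (fun y => v y ^ q) x
      = 2*s * (A * b x) * (q * (C * v x) * Z) := by
    rw [hΓpow b _ (2*s) hb x, eb1, hΓsymm b, hΓpow v b q hv x, ev1, hZdef]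

  -- assemble
  have key := hprod (fun y => b y ^ (2*s)) (fun y => v y ^ q) x
  rw [key, hΓBV, eb0, ev0, eb3]
  have t1 := mul_le_mul_of_nonneg_left hΔvq (by positivity : (0:ℝ) ≤ A * b x ^ 2)
  have t2 := mul_le_mul_of_nonneg_left hΔbs (by positivity : (0:ℝ) ≤ C * v x ^ 2)
  have t3 : 0 ≤ A * C * ((q * b x)^2 * Y + (2*s*v x)^2 * X + 2*(q * b x)*(2*s*v x)*Z) :=
    mul_nonneg (by positivity) (quad_aux (q * b x) (2*s*v x) X Y Z hXn hYn hZ2)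
  linarith [t1, t2, t3]
end
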